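/- Let L be the Laplacian matrix of a connected weighted graph on a finite vertex set V, and let Q be a nonempty proper subset of V. Then the grounded Laplacian L_Q, i.e., the principal submatrix of L obtained by deleting the rows and columns with indices in Q, is positive definite (in particular, it is invertible). -/

import Mathlib

open Matrix

/-- The simple graph whose adjacency relation is `i ≠ j ∧ W i j > 0`. -/
def weightedAdjGraph {V : Type*} (W : V → V → ℝ) (hsymm : ∀ i j, W i j = W j i) :
    SimpleGraph V where
  Adj i j := i ≠ j ∧ 0 < W i j
  symm := by
    constructor
    intro i j h
    exact ⟨h.1.symm, by rw [← hsymm i j]; exact h.2⟩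
  loopless := by constructor; intro i h; exact h.1 rfl

/-- The Laplacian matrix of a weighted graph: `L i i = ∑ j, W i j` and
`L i j = -W i j` for `i ≠ j`. -/
def laplacian {V : Type*} [Fintype V] [DecidableEq V] (W : V → V → ℝ) : Matrix V V ℝ :=
  Matrix.of fun i j => if i = j then ∑ k, W i k else -W i j

/-- The grounded Laplacian `L_Q`: the principal submatrix of `L` indexed by `V \ Q`. -/
def grounded {V : Type*} (L : Matrix V V ℝ) (Q : Finset V) :
    Matrix {i // i ∉ Q} {i // i ∉ Q} ℝ :=
  L.submatrix Subtype.val Subtype.val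

lemma sum_compl_subtype {V : Type*} [Fintype V] [DecidableEq V] (Q : Finset V)
    (g : V → ℝ) (hg : ∀ i ∈ Q, g i = 0) :
    ∑ i : {i // i ∉ Q}, g i = ∑ i, g i := by
  classical
  have h1 : ∑ i ∈ Qᶜ, g i = ∑ i : {i // i ∉ Q}, g ↑i :=
    Finset.sum_subtype Qᶜ (fun x => Finset.mem_compl) g
  have h2 := Finset.sum_compl_add_sum Q g
  rw [Finset.sum_eq_zero hg, add_zero] at h2
  rw [← h1, h2]

lemma laplacian_quad {V : Type*} [Fintype V] [DecidableEq V]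
    (W : V → V → ℝ) (hsymm : ∀ i j, W i j = W j i) (hdiag : ∀ i, W i i = 0)
    (x : V → ℝ) :
    x ⬝ᵥ (laplacian W *ᵥ x) = (1/2) * ∑ i, ∑ j, W i j * (x i - x j)^2 := by
  classical
  have h1 : x ⬝ᵥ (laplacian W *ᵥ x)
      = (∑ i, ∑ j, W i j * x i * x i) - ∑ i, ∑ j, W i j * x i * x j := by
    simp only [dotProduct, mulVec, dotProduct, laplacian, of_apply]
    rw [← Finset.sum_sub_distrib]
    refine Finset.sum_congr rfl fun i _ => ?_
    have hexp : ∀ j, (if i = j then ∑ k, W i k else -W i j) * x j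
        = (if i = j then (∑ k, W i k) * x i else 0) - W i j * x j := by
      intro j
      by_cases h : i = j
      · subst h; simp [hdiag i]
      · simp [h]
    rw [Finset.sum_congr rfl fun j _ => hexp j, Finset.sum_sub_distrib,
      Finset.sum_ite_eq Finset.univ i, if_pos (Finset.mem_univ i), mul_sub]
    congr 1
    · calc x i * ((∑ k, W i k) * x i) = (∑ k, W i k) * (x i * x i) := by ring
        _ = ∑ j, W i j * (x i * x i) := Finset.sum_mul _ _ _
        _ = ∑ j, W i j * x i * x i := Finset.sum_congr rfl fun j _ => by ring
    · rw [Finset.mul_sum]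
      exact Finset.sum_congr rfl fun j _ => by ring
  have hswap : ∑ i, ∑ j, W i j * x j * x j = ∑ i, ∑ j, W i j * x i * x i := by
    rw [Finset.sum_comm]
    exact Finset.sum_congr rfl fun i _ => Finset.sum_congr rfl fun j _ => by
      rw [hsymm j i]
  have h2 : ∑ i, ∑ j, W i j * (x i - x j)^2
      = ((∑ i, ∑ j, W i j * x i * x i) - ∑ i, ∑ j, 2 * (W i j * x i * x j))
        + ∑ i, ∑ j, W i j * x j * x j := by
    rw [← Finset.sum_sub_distrib, ← Finset.sum_add_distrib]
    refine Finset.sum_congr rfl fun i _ => ?_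
    rw [← Finset.sum_sub_distrib, ← Finset.sum_add_distrib]
    exact Finset.sum_congr rfl fun j _ => by ring
  have hmul : ∑ i, ∑ j, 2 * (W i j * x i * x j)
      = 2 * ∑ i, ∑ j, W i j * x i * x j := by
    rw [Finset.mul_sum]
    exact Finset.sum_congr rfl fun i _ => (Finset.mul_sum _ _ _).symm
  rw [h1, h2, hswap, hmul]; ring

/-- For a connected weighted graph and a nonempty proper subset `Q` of vertices, the
grounded Laplacian `L_Q` is positive definite; in particular it is invertible. -/
theorem grounded_laplacian_posDef {V : Type*} [Fintype V] [DecidableEq V]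
    (W : V → V → ℝ) (hsymm : ∀ i j, W i j = W j i)
    (hdiag : ∀ i, W i i = 0) (hnonneg : ∀ i j, 0 ≤ W i j)
    (hconn : (weightedAdjGraph W hsymm).Connected)
    (Q : Finset V) (hQ : Q.Nonempty) (hQproper : Q ≠ Finset.univ) :
    (grounded (laplacian W) Q).PosDef ∧ IsUnit (grounded (laplacian W) Q).det := by
  classical
  have hHerm : (grounded (laplacian W) Q).IsHermitian := by
    ext i j
    simp only [grounded, conjTranspose_apply, submatrix_apply, laplacian, of_apply,
      star, RingHom.id_apply]
    by_cases h : (j : V) = (i : V)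
    · simp [h]
    · have h' : (i : V) ≠ (j : V) := fun e => h e.symm
      simp [h, h', hsymm (j : V) (i : V)]
  have hpd : (grounded (laplacian W) Q).PosDef := by
    refine Matrix.PosDef.of_dotProduct_mulVec_pos hHerm fun x hx => ?_
    -- extend x by zero on Q
    set y : V → ℝ := fun i => if h : i ∈ Q then 0 else x ⟨i, h⟩ with hy
    have hy0 : ∀ i ∈ Q, y i = 0 := fun i hi => by simp [hy, hi]
    have hyx : ∀ i : {i // i ∉ Q}, y ↑i = x i := fun i => by
      simp [hy, i.2]
    -- the quadratic form equals the full form of y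
    have hform : x ⬝ᵥ (grounded (laplacian W) Q *ᵥ x) = y ⬝ᵥ (laplacian W *ᵥ y) := by
      simp only [dotProduct, mulVec, dotProduct, grounded, submatrix_apply]
      rw [← sum_compl_subtype Q (fun i => y i * ∑ j, laplacian W i j * y j)
        (fun i hi => by simp [hy0 i hi])]
      refine Finset.sum_congr rfl fun i _ => ?_
      rw [hyx i]
      congr 1
      rw [← sum_compl_subtype Q (fun j => laplacian W ↑i j * y j)
        (fun j hj => by simp [hy0 j hj])]
      exact Finset.sum_congr rfl fun j _ => by rw [hyx j]
    have hquad := laplacian_quad W hsymm hdiag y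
    have hterm_nonneg : ∀ p ∈ (Finset.univ : Finset V),
        (0:ℝ) ≤ ∑ j, W p j * (y p - y j)^2 := fun p _ =>
      Finset.sum_nonneg fun j _ => mul_nonneg (hnonneg p j) (sq_nonneg _)
    have hS_nonneg : (0:ℝ) ≤ ∑ i, ∑ j, W i j * (y i - y j)^2 :=
      Finset.sum_nonneg hterm_nonneg
    have hS_ne : (∑ i, ∑ j, W i j * (y i - y j)^2) ≠ 0 := by
      intro hS
      -- all terms vanish, so y is constant along edges
      have hall : ∀ i j, 0 < W i j → y i = y j := by
        intro i j hW
        have h1 := (Finset.sum_eq_zero_iff_of_nonneg hterm_nonneg).mp hS i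
          (Finset.mem_univ i)
        have h2 := (Finset.sum_eq_zero_iff_of_nonneg
          (fun j _ => mul_nonneg (hnonneg i j) (sq_nonneg (y i - y j)))).mp h1 j
          (Finset.mem_univ j)
        have := (mul_eq_zero.mp h2).resolve_left (ne_of_gt hW)
        have := pow_eq_zero_iff (n := 2) (by norm_num) |>.mp this
        linarith [sub_eq_zero.mp this]
      have hreach : ∀ i j : V, (weightedAdjGraph W hsymm).Reachable i j → y i = y j := by
        intro i j ⟨w⟩
        induction w with
        | nil => rfl
        | cons h p ih => exact (hall _ _ h.2).trans ih
      obtain ⟨q, hq⟩ := hQ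
      have hyconst : ∀ i, y i = 0 := fun i =>
        (hreach i q (hconn.preconnected i q)).trans (hy0 q hq)
      apply hx
      funext i
      have := hyconst ↑i
      rw [hyx i] at this
      simpa using this
    have hS_pos : (0:ℝ) < ∑ i, ∑ j, W i j * (y i - y j)^2 :=
      lt_of_le_of_ne hS_nonneg (Ne.symm hS_ne)
    have : (0:ℝ) < x ⬝ᵥ (grounded (laplacian W) Q *ᵥ x) := by
      rw [hform, hquad]; linarith
    simpa [star, dotProduct] using this
  exact ⟨hpd, isUnit_iff_ne_zero.mpr (ne_of_gt hpd.det_pos)⟩
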